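/- Let G be a group acting continuously on the right on a topological space M. For k ∈ G, let P_k(M) = {γ ∈ C([0,1], M) : γ(0)·k = γ(1)} with the compact-open topology. For γ ∈ P_k(M) and s ∈ ℝ define (s·γ)(t) := γ(t + s − ⌊t + s⌋)·k^{⌊t+s⌋}, where ⌊·⌋ is the floor function. Then: (i) s·γ is a continuous path lying again in P_k(M); (ii) 0·γ = γ and s·(s'·γ) = (s+s')·γ for all s, s' ∈ ℝ, so this defines an action of the additive group ℝ on P_k(M); and (iii) (1·γ)(t) = γ(t)·k for all t, i.e., 1·γ equals the pointwise translate γ_k of γ by k. -/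

import Mathlib

/-- The space `P_k(M) = {γ ∈ C([0,1], M) : γ(0)·k = γ(1)}` with the compact-open topology. -/
abbrev PSp {M G : Type*} [TopologicalSpace M] (act : M → G → M) (k : G) : Type _ :=
  {γ : C(unitInterval, M) // act (γ 0) k = γ 1}

/-- The rotation `(s·γ)(t) := γ(t + s − ⌊t + s⌋)·k^⌊t+s⌋` (at the level of functions
`[0,1] → M`; note `t + s − ⌊t + s⌋ = Int.fract (t + s) ∈ [0,1)`). -/
noncomputable def rotFn {M G : Type*} [Group G] (act : M → G → M) (k : G) (s : ℝ)
    (γ : unitInterval → M) : unitInterval → M :=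
  fun t =>
    act (γ ⟨Int.fract ((t : ℝ) + s), Int.fract_nonneg _, (Int.fract_lt_one _).le⟩)
      (k ^ ⌊(t : ℝ) + s⌋)

private lemma rot_congr {M G : Type*} [Group G] (act : M → G → M) (k : G)
    (γ : unitInterval → M) {a b : ℝ} (h : a = b) :
    act (γ ⟨Int.fract a, Int.fract_nonneg _, (Int.fract_lt_one _).le⟩) (k ^ ⌊a⌋) =
    act (γ ⟨Int.fract b, Int.fract_nonneg _, (Int.fract_lt_one _).le⟩) (k ^ ⌊b⌋) := by
  subst h; rfl

private lemma rot_cont_aux {M G : Type*} [TopologicalSpace M] [Group G]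
    (act : M → G → M)
    (hcont : ∀ g : G, Continuous fun x => act x g)
    (hmul : ∀ x g h, act (act x g) h = act x (g * h))
    (k : G) (γ : C(unitInterval, M)) (hγ : act (γ 0) k = γ 1) :
    Continuous (fun x : ℝ =>
      act (γ ⟨Int.fract x, Int.fract_nonneg _, (Int.fract_lt_one _).le⟩) (k ^ ⌊x⌋)) := by
  set H : ℝ → M := fun x =>
    act (γ ⟨Int.fract x, Int.fract_nonneg _, (Int.fract_lt_one _).le⟩) (k ^ ⌊x⌋) with hH
  set seg : ℤ → ℝ → M := fun n x =>
    act (γ (Set.projIcc (0:ℝ) 1 zero_le_one (x - n))) (k ^ n) with hseg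
  have segc : ∀ n : ℤ, Continuous (seg n) := by
    intro n
    exact (hcont _).comp (γ.continuous.comp (continuous_projIcc.comp
      (continuous_id.sub continuous_const)))
  have Heq : ∀ (n : ℤ) (x : ℝ), x ∈ Set.Icc (n : ℝ) (n + 1) → H x = seg n x := by
    intro n x hx
    rcases lt_or_eq_of_le hx.2 with h1 | h1
    · have hfl : ⌊x⌋ = n := Int.floor_eq_iff.2 ⟨hx.1, h1⟩
      have hfr : Int.fract x = x - n := by
        rw [Int.fract, hfl]
      have hproj : Set.projIcc (0:ℝ) 1 zero_le_one (x - n) =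
          ⟨x - n, by linarith [hx.1], by linarith⟩ :=
        Set.projIcc_of_mem _ ⟨by linarith [hx.1], by linarith⟩
      show act (γ _) (k ^ ⌊x⌋) = act (γ _) (k ^ n)
      rw [hfl, hproj]
      congr 2
      exact Subtype.ext hfr
    · have hx1 : x = ((n + 1 : ℤ) : ℝ) := by push_cast; linarith
      have hfr : Int.fract x = 0 := by rw [hx1, Int.fract_intCast]
      have hfl : ⌊x⌋ = n + 1 := by rw [hx1, Int.floor_intCast]
      have hd : x - n = 1 := by push_cast at hx1; linarith
      have hproj : Set.projIcc (0:ℝ) 1 zero_le_one (x - n) = 1 := by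
        apply Subtype.ext
        rw [hd]
        rw [Set.projIcc_of_mem _ ⟨zero_le_one, le_rfl⟩]
        rfl
      have h0 : (⟨Int.fract x, Int.fract_nonneg _, (Int.fract_lt_one _).le⟩ : unitInterval)
          = 0 := Subtype.ext hfr
      show act (γ _) (k ^ ⌊x⌋) = act (γ _) (k ^ n)
      rw [hfl, hproj, h0]
      rw [show (n + 1 : ℤ) = 1 + n by ring, zpow_add, zpow_one, ← hmul, hγ]
  rw [continuous_iff_continuousAt]
  intro x
  by_cases hx : (⌊x⌋ : ℝ) = x
  · set n := ⌊x⌋ with hn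
    have hleft : ContinuousWithinAt H (Set.Iic x) x := by
      refine ((segc (n - 1)).continuousWithinAt).congr_of_eventuallyEq ?_ ?_
      · refine Filter.eventuallyEq_of_mem
          (inter_mem_nhdsWithin _ ((isOpen_Ioi (a := x - 1)).mem_nhds
            (by simp only [Set.mem_Ioi]; linarith))) ?_
        intro y hy
        have hy1 : y ≤ x := hy.1
        have hy2 : x - 1 < y := hy.2
        refine Heq (n - 1) y ⟨?_, ?_⟩ <;> push_cast <;> rw [hx] <;> linarith
      · refine Heq (n - 1) x ⟨?_, ?_⟩ <;> push_cast <;> rw [hx] <;> linarith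
    have hright : ContinuousWithinAt H (Set.Ici x) x := by
      refine ((segc n).continuousWithinAt).congr_of_eventuallyEq ?_ ?_
      · refine Filter.eventuallyEq_of_mem
          (inter_mem_nhdsWithin _ ((isOpen_Iio (a := x + 1)).mem_nhds
            (by simp only [Set.mem_Iio]; linarith))) ?_
        intro y hy
        have hy1 : x ≤ y := hy.1
        have hy2 : y < x + 1 := hy.2
        refine Heq n y ⟨?_, ?_⟩ <;> rw [hx] <;> linarith
      · refine Heq n x ⟨?_, ?_⟩ <;> rw [hx] <;> linarith
    have := hleft.union hright
    rwa [Set.Iic_union_Ici, continuousWithinAt_univ] at this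
  · have h1 : (⌊x⌋ : ℝ) < x := lt_of_le_of_ne (Int.floor_le x) hx
    have h2 : x < (⌊x⌋ : ℝ) + 1 := Int.lt_floor_add_one x
    refine ((segc ⌊x⌋).continuousAt).congr ?_
    refine Filter.eventuallyEq_of_mem ((isOpen_Ioo (a := (⌊x⌋:ℝ)) (b := (⌊x⌋:ℝ)+1)).mem_nhds
      ⟨h1, h2⟩) ?_
    intro y hy
    exact (Heq ⌊x⌋ y ⟨hy.1.le, hy.2.le⟩).symm

/-- Let G be a group acting continuously on the right on a topological space M,
and k ∈ G.  For γ ∈ P_k(M) and s ∈ ℝ define (s·γ)(t) := γ(t + s − ⌊t + s⌋)·k^⌊t+s⌋.  Then: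
(i) s·γ is a continuous path lying again in P_k(M); (ii) 0·γ = γ and s·(s'·γ) = (s+s')·γ, so
this defines an action of the additive group ℝ on P_k(M); and (iii) (1·γ)(t) = γ(t)·k for all
t, i.e. 1·γ is the pointwise translate γ_k of γ by k. -/
theorem real_action_on_twisted_paths
    {M G : Type*} [TopologicalSpace M] [Group G]
    (act : M → G → M)
    (hcont : ∀ g : G, Continuous fun x => act x g)
    (hone : ∀ x, act x 1 = x)
    (hmul : ∀ x g h, act (act x g) h = act x (g * h))
    (k : G) :
    -- (i) s·γ is a continuous path lying again in P_k(M)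
    (∀ (γ : PSp act k) (s : ℝ),
      Continuous (rotFn act k s ⇑γ.1) ∧
      act (rotFn act k s ⇑γ.1 0) k = rotFn act k s ⇑γ.1 1) ∧
    -- (ii) 0·γ = γ and s·(s'·γ) = (s+s')·γ
    (∀ γ : PSp act k, rotFn act k 0 ⇑γ.1 = ⇑γ.1) ∧
    (∀ (γ : PSp act k) (s s' : ℝ),
      rotFn act k s (rotFn act k s' ⇑γ.1) = rotFn act k (s + s') ⇑γ.1) ∧
    -- (iii) (1·γ)(t) = γ(t)·k
    (∀ (γ : PSp act k) (t : unitInterval), rotFn act k 1 ⇑γ.1 t = act (γ.1 t) k) := by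
  refine ⟨?_, ?_, ?_, ?_⟩
  · -- (i)
    intro γ s
    constructor
    · have hc := rot_cont_aux act hcont hmul k γ.1 γ.2
      exact hc.comp (continuous_subtype_val.add continuous_const)
    · simp only [rotFn]
      have e0 : ((0 : unitInterval) : ℝ) + s = s := by norm_num
      have e1 : ((1 : unitInterval) : ℝ) + s = s + 1 := by norm_num; ring
      rw [rot_congr act k ⇑γ.1 e0, rot_congr act k ⇑γ.1 e1]
      have hfr : γ.1.toFun ⟨Int.fract (s + 1), Int.fract_nonneg _, (Int.fract_lt_one _).le⟩
          = γ.1.toFun ⟨Int.fract s, Int.fract_nonneg _, (Int.fract_lt_one _).le⟩ :=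
        congrArg _ (Subtype.ext (Int.fract_add_one s))
      rw [Int.floor_add_one, hmul]
      rw [show γ.1.toFun = ⇑γ.1 from rfl] at hfr
      rw [hfr, ← zpow_add_one]
  · -- 0 • γ = γ
    intro γ
    funext t
    show act (⇑γ.1 _) (k ^ ⌊(t:ℝ) + 0⌋) = ⇑γ.1 t
    rw [rot_congr act k ⇑γ.1 (add_zero (t:ℝ))]
    by_cases ht : (t : ℝ) < 1
    · have hfr : Int.fract (t : ℝ) = t := Int.fract_eq_self.2 ⟨t.2.1, ht⟩
      have hfl : ⌊(t : ℝ)⌋ = 0 := Int.floor_eq_zero_iff.2 ⟨t.2.1, ht⟩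
      rw [hfl, zpow_zero, hone]
      exact congrArg _ (Subtype.ext hfr)
    · have ht1 : (t : ℝ) = 1 := le_antisymm t.2.2 (not_lt.1 ht)
      have hfr : Int.fract (t : ℝ) = 0 := by rw [ht1, Int.fract_one]
      have hfl : ⌊(t : ℝ)⌋ = 1 := by rw [ht1, Int.floor_one]
      have h0 : (⟨Int.fract (t:ℝ), Int.fract_nonneg _, (Int.fract_lt_one _).le⟩ : unitInterval)
          = 0 := Subtype.ext hfr
      have h1 : t = 1 := Subtype.ext ht1
      rw [hfl, zpow_one, h0, h1]
      exact γ.2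
  · -- s • (s' • γ) = (s + s') • γ
    intro γ s s'
    funext t
    show act (act (⇑γ.1 _) (k ^ ⌊Int.fract ((t:ℝ) + s) + s'⌋)) (k ^ ⌊(t:ℝ) + s⌋) = _
    rw [hmul]
    have key : Int.fract ((t : ℝ) + s) + s' = ((t : ℝ) + (s + s')) - (⌊(t : ℝ) + s⌋ : ℤ) := by
      rw [Int.fract]; ring
    have e1 : Int.fract (Int.fract ((t : ℝ) + s) + s') = Int.fract ((t : ℝ) + (s + s')) := by
      rw [key, Int.fract_sub_intCast]
    have e2 : ⌊Int.fract ((t : ℝ) + s) + s'⌋ = ⌊(t : ℝ) + (s + s')⌋ - ⌊(t : ℝ) + s⌋ := by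
      rw [key, Int.floor_sub_intCast]
    rw [e2, ← zpow_add, sub_add_cancel]
    congr 2
    exact Subtype.ext e1
  · -- 1 • γ = γ_k
    intro γ t
    show act (⇑γ.1 _) (k ^ ⌊(t:ℝ) + 1⌋) = act (γ.1 t) k
    have hγ1 : ⇑γ.1 ⟨Int.fract ((t:ℝ) + 1), Int.fract_nonneg _, (Int.fract_lt_one _).le⟩
        = ⇑γ.1 ⟨Int.fract (t:ℝ), Int.fract_nonneg _, (Int.fract_lt_one _).le⟩ :=
      congrArg _ (Subtype.ext (Int.fract_add_one (t:ℝ)))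
    rw [hγ1, Int.floor_add_one]
    by_cases ht : (t : ℝ) < 1
    · have hfr : Int.fract (t : ℝ) = t := Int.fract_eq_self.2 ⟨t.2.1, ht⟩
      have hfl : ⌊(t : ℝ)⌋ = 0 := Int.floor_eq_zero_iff.2 ⟨t.2.1, ht⟩
      rw [hfl, zero_add, zpow_one]
      congr 2
      exact Subtype.ext hfr
    · have ht1 : (t : ℝ) = 1 := le_antisymm t.2.2 (not_lt.1 ht)
      have hfr : Int.fract (t : ℝ) = 0 := by rw [ht1, Int.fract_one]
      have hfl : ⌊(t : ℝ)⌋ = 1 := by rw [ht1, Int.floor_one]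
      have h0 : (⟨Int.fract (t:ℝ), Int.fract_nonneg _, (Int.fract_lt_one _).le⟩ : unitInterval)
          = 0 := Subtype.ext hfr
      have h1 : γ.1 t = γ.1 1 := congrArg _ (Subtype.ext ht1)
      rw [hfl, h0, h1, ← γ.2, hmul]
      congr 1
      rw [zpow_add, zpow_one]
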